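/- arXiv:2007.06970 — 2 statements merged into one kernel-verified Lean document; each statement's English description precedes it below -/
import Mathlib

section
/- Let 𝐗 = (X,𝕏) and 𝐘 = (Y,𝕐) be p-rough paths controlled by ω on [0,T], and suppose there are constants C ≥ 0 and θ > 1 with |X_{st} − Y_{st}| ≤ C ω(s,t)^θ and |𝕏_{st} − 𝕐_{st}| ≤ C ω(s,t)^θ for all 0 ≤ s ≤ t ≤ T. Then X_{st} = Y_{st} for all 0 ≤ s ≤ t ≤ T and 𝕏 = 𝕐. -/
open Filter Topology Set

noncomputable section

/-- `ω` is a control on `[0,T]`: continuous on the simplex, vanishing on the diagonal,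
superadditive and nonnegative. -/
def IsControl (T : ℝ) (ω : ℝ → ℝ → ℝ) : Prop :=
  ContinuousOn (fun q : ℝ × ℝ => ω q.1 q.2) {q : ℝ × ℝ | 0 ≤ q.1 ∧ q.1 ≤ q.2 ∧ q.2 ≤ T} ∧
    (∀ t : ℝ, 0 ≤ t → t ≤ T → ω t t = 0) ∧
    (∀ s u t : ℝ, 0 ≤ s → s ≤ u → u ≤ t → t ≤ T → ω s u + ω u t ≤ ω s t) ∧
    (∀ s t : ℝ, 0 ≤ s → s ≤ t → t ≤ T → 0 ≤ ω s t)

/-- Membership in `C^{1/r}_ω([0,T],V)`: continuity on `[0,T]` together with the increment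
bound `‖Y_t − Y_s‖ ≤ C ω(s,t)^r`. -/
def HolderPath (T r : ℝ) (ω : ℝ → ℝ → ℝ) {V : Type*} [NormedAddCommGroup V]
    (Y : ℝ → V) : Prop :=
  ContinuousOn Y (Set.Icc 0 T) ∧
    ∃ C : ℝ, ∀ s t : ℝ, 0 ≤ s → s ≤ t → t ≤ T → ‖Y t - Y s‖ ≤ C * ω s t ^ r

/-- `(X, XX)` is a `p`-rough path controlled by `ω` on `[0,T]`. -/
def IsRoughPath (T p : ℝ) (ω : ℝ → ℝ → ℝ) {d : ℕ}
    (X : ℝ → Fin d → ℝ) (XX : ℝ → ℝ → Fin d → Fin d → ℝ) : Prop :=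
  HolderPath T (1 / p) ω X ∧
    ContinuousOn (fun q : ℝ × ℝ => XX q.1 q.2) {q : ℝ × ℝ | 0 ≤ q.1 ∧ q.1 ≤ q.2 ∧ q.2 ≤ T} ∧
    (∃ C : ℝ, ∀ s t : ℝ, 0 ≤ s → s ≤ t → t ≤ T → ‖XX s t‖ ≤ C * ω s t ^ (2 / p)) ∧
    (∀ s u t : ℝ, 0 ≤ s → s ≤ u → u ≤ t → t ≤ T → ∀ α β : Fin d,
      XX s t α β = XX s u α β + (X u α - X s α) * (X t β - X u β) + XX u t α β)

/-- `(H, H')` is an `X`-controlled path with values in `V`; `H' t γ` is the Gubinelli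
derivative at time `t` in the direction of the `γ`-th coordinate. -/
def IsControlledPath (T p : ℝ) (ω : ℝ → ℝ → ℝ) {d : ℕ} (X : ℝ → Fin d → ℝ)
    {V : Type*} [NormedAddCommGroup V] [NormedSpace ℝ V]
    (H : ℝ → V) (H' : ℝ → Fin d → V) : Prop :=
  HolderPath T (1 / p) ω H ∧ HolderPath T (1 / p) ω H' ∧
    ∃ C : ℝ, ∀ s t : ℝ, 0 ≤ s → s ≤ t → t ≤ T →
      ‖H t - H s - ∑ γ, (X t γ - X s γ) • H' s γ‖ ≤ C * ω s t ^ (2 / p)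

/-- The bracket `[𝐗]` of the rough path `(X, XX)`. -/
def bracket {d : ℕ} (X : ℝ → Fin d → ℝ) (XX : ℝ → ℝ → Fin d → Fin d → ℝ)
    (s t : ℝ) (α β : Fin d) : ℝ :=
  (X t α - X s α) * (X t β - X s β) - (XX s t α β + XX s t β α)

/-- A partition of `[s,t]` into `n` consecutive intervals. -/
structure IntervalPartition (s t : ℝ) where
  n : ℕ
  pts : ℕ → ℝ
  mono : Monotone pts
  first : pts 0 = s
  last : pts n = t

/-- The mesh of a partition. -/
def IntervalPartition.mesh {s t : ℝ} (π : IntervalPartition s t) : ℝ :=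
  ⨆ i : Fin π.n, (π.pts (i.1 + 1) - π.pts i.1)

/-- The Riemann sum of a two-parameter summand along a partition. -/
def riemannSum {s t : ℝ} {V : Type*} [AddCommMonoid V]
    (π : IntervalPartition s t) (f : ℝ → ℝ → V) : V :=
  ∑ i ∈ Finset.range π.n, f (π.pts i) (π.pts (i + 1))

/-- `L` is the limit of the Riemann sums of `f` along every sequence of partitions of `[s,t]`
with mesh tending to `0`. -/
def RSumLimit {V : Type*} [AddCommMonoid V] [TopologicalSpace V] (s t : ℝ)
    (f : ℝ → ℝ → V) (L : V) : Prop :=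
  ∀ π : ℕ → IntervalPartition s t,
    Tendsto (fun n => (π n).mesh) atTop (𝓝 0) →
      Tendsto (fun n => riemannSum (π n) f) atTop (𝓝 L)

/-- The compensated Riemann summand `H_u X_{uv} + H'_u 𝕏_{uv}` of a controlled integrand
against a rough path. -/
def roughSummand {d e : ℕ} (X : ℝ → Fin d → ℝ) (XX : ℝ → ℝ → Fin d → Fin d → ℝ)
    (H : ℝ → Fin e → Fin d → ℝ) (H' : ℝ → Fin d → Fin e → Fin d → ℝ) :
    ℝ → ℝ → Fin e → ℝ :=
  fun u v k => (∑ γ, H u k γ * (X v γ - X u γ)) + ∑ α, ∑ β, H' u α k β * XX u v α β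

/-- The partial derivative `∂_α f^i (x)`. -/
def pderiv {m n : ℕ} (f : (Fin m → ℝ) → (Fin n → ℝ)) (x : Fin m → ℝ)
    (α : Fin m) (i : Fin n) : ℝ :=
  fderiv ℝ f x (Pi.single α 1) i

/-- The second partial derivative `∂_{αβ} f^k (x)`. -/
def pderiv2 {m n : ℕ} (f : (Fin m → ℝ) → (Fin n → ℝ)) (x : Fin m → ℝ)
    (α β : Fin m) (k : Fin n) : ℝ :=
  fderiv ℝ (fun y => fderiv ℝ f y (Pi.single β 1) k) x (Pi.single α 1)

/-- Abstract vanishing lemma: a nonnegative subadditive two-parameter function bounded by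
`C ω^θ` with `θ > 1` vanishes. -/
lemma key_vanish (T : ℝ) (hT : 0 ≤ T) (ω : ℝ → ℝ → ℝ) (hω : IsControl T ω)
    (Δ : ℝ → ℝ → ℝ)
    (hΔ0 : ∀ s t : ℝ, 0 ≤ s → s ≤ t → t ≤ T → 0 ≤ Δ s t)
    (hsub : ∀ s u t : ℝ, 0 ≤ s → s ≤ u → u ≤ t → t ≤ T → Δ s t ≤ Δ s u + Δ u t)
    (C θ : ℝ) (hC : 0 ≤ C) (hθ : 1 < θ)
    (hb : ∀ s t : ℝ, 0 ≤ s → s ≤ t → t ≤ T → Δ s t ≤ C * ω s t ^ θ) :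
    ∀ s t : ℝ, 0 ≤ s → s ≤ t → t ≤ T → Δ s t = 0 := by
  set k : ℝ := (2 : ℝ) ^ (1 - θ) with hk
  have hk0 : 0 < k := Real.rpow_pos_of_pos (by norm_num) _
  have hk1 : k < 1 := Real.rpow_lt_one_of_one_lt_of_neg (by norm_num) (by linarith)
  have main : ∀ n : ℕ, ∀ s t : ℝ, 0 ≤ s → s ≤ t → t ≤ T →
      Δ s t ≤ C * k ^ n * ω s t ^ θ := by
    intro n
    induction n with
    | zero => intro s t hs hst ht; simpa using hb s t hs hst ht
    | succ n ih =>
      intro s t hs hst ht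
      -- find a midpoint u with ω s u = ω u t
      have hc1 : ContinuousOn (fun u => ω s u) (Icc s t) := by
        have : ContinuousOn ((fun q : ℝ × ℝ => ω q.1 q.2) ∘ (fun u => (s, u))) (Icc s t) :=
          hω.1.comp (by fun_prop) (fun u hu => ⟨hs, hu.1, hu.2.trans ht⟩)
        exact this
      have hc2 : ContinuousOn (fun u => ω u t) (Icc s t) := by
        have : ContinuousOn ((fun q : ℝ × ℝ => ω q.1 q.2) ∘ (fun u => (u, t))) (Icc s t) :=
          hω.1.comp (by fun_prop) (fun u hu => ⟨hs.trans hu.1, hu.2, ht⟩)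
        exact this
      have hcont : ContinuousOn (fun u => ω s u - ω u t) (Icc s t) := hc1.sub hc2
      have hωst : 0 ≤ ω s t := hω.2.2.2 s t hs hst ht
      have hmem : (0 : ℝ) ∈ Icc ((fun u => ω s u - ω u t) s) ((fun u => ω s u - ω u t) t) := by
        constructor
        · simp only
          rw [hω.2.1 s hs (hst.trans ht)]
          linarith
        · simp only
          rw [hω.2.1 t (hs.trans hst) ht]
          linarith
      obtain ⟨u, hu, hfu⟩ := intermediate_value_Icc hst hcont hmem
      have hsu : s ≤ u := hu.1
      have hut : u ≤ t := hu.2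
      have hu0 : 0 ≤ u := hs.trans hsu
      have huT : u ≤ T := hut.trans ht
      set a : ℝ := ω s u with ha
      have ha0 : 0 ≤ a := hω.2.2.2 s u hs hsu huT
      have haut : ω u t = a := by
        have : ω s u - ω u t = 0 := hfu
        linarith
      have h2a : a + a ≤ ω s t := by
        have := hω.2.2.1 s u t hs hsu hut ht
        rw [haut] at this; linarith
      have haw : a ≤ ω s t / 2 := by linarith
      have hpow : a ^ θ ≤ (ω s t / 2) ^ θ :=
        Real.rpow_le_rpow ha0 haw (by linarith)
      have hCk : 0 ≤ C * k ^ n := mul_nonneg hC (pow_nonneg hk0.le n)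
      have key2 : 2 * (ω s t / 2) ^ θ = k * ω s t ^ θ := by
        rw [Real.div_rpow hωst (by norm_num), hk, Real.rpow_sub (by norm_num : (0:ℝ) < 2),
          Real.rpow_one]
        have h2θ : (0:ℝ) < (2:ℝ) ^ θ := Real.rpow_pos_of_pos (by norm_num) _
        field_simp
      calc Δ s t ≤ Δ s u + Δ u t := hsub s u t hs hsu hut ht
        _ ≤ C * k ^ n * a ^ θ + C * k ^ n * (ω u t) ^ θ :=
            add_le_add (ih s u hs hsu huT) (ih u t hu0 hut ht)
        _ = C * k ^ n * (2 * a ^ θ) := by rw [haut]; ring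
        _ ≤ C * k ^ n * (2 * (ω s t / 2) ^ θ) := by
            apply mul_le_mul_of_nonneg_left (by linarith) hCk
        _ = C * k ^ (n + 1) * ω s t ^ θ := by rw [key2]; ring
  intro s t hs hst ht
  have hten : Tendsto (fun n : ℕ => C * k ^ n * ω s t ^ θ) atTop (𝓝 0) := by
    have h1 : Tendsto (fun n : ℕ => k ^ n) atTop (𝓝 0) :=
      tendsto_pow_atTop_nhds_zero_of_lt_one hk0.le hk1
    have := (h1.const_mul C).mul_const (ω s t ^ θ)
    simpa [mul_comm, mul_assoc, mul_left_comm] using this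
  have hle : Δ s t ≤ 0 := ge_of_tendsto' hten (fun n => main n s t hs hst ht)
  exact le_antisymm hle (hΔ0 s t hs hst ht)

/-- Two rough paths whose traces and second order parts differ by
`O(ω(s,t)^θ)` with `θ > 1` have identical increments and second order parts. -/
theorem statement2 (T p : ℝ) (hT : 0 ≤ T) (hp1 : 1 ≤ p) (hp3 : p < 3) (d : ℕ)
    (ω : ℝ → ℝ → ℝ) (hω : IsControl T ω)
    (X Y : ℝ → Fin d → ℝ) (XX YY : ℝ → ℝ → Fin d → Fin d → ℝ)
    (hX : IsRoughPath T p ω X XX) (hY : IsRoughPath T p ω Y YY)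
    (C θ : ℝ) (hC : 0 ≤ C) (hθ : 1 < θ)
    (h1 : ∀ s t : ℝ, 0 ≤ s → s ≤ t → t ≤ T →
      ‖(X t - X s) - (Y t - Y s)‖ ≤ C * ω s t ^ θ)
    (h2 : ∀ s t : ℝ, 0 ≤ s → s ≤ t → t ≤ T →
      ‖(fun (α β : Fin d) => XX s t α β - YY s t α β)‖ ≤ C * ω s t ^ θ) :
    (∀ s t : ℝ, 0 ≤ s → s ≤ t → t ≤ T → X t - X s = Y t - Y s) ∧
    (∀ s t : ℝ, 0 ≤ s → s ≤ t → t ≤ T → XX s t = YY s t) := by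
  -- Part 1: traces agree
  have part1 : ∀ s t : ℝ, 0 ≤ s → s ≤ t → t ≤ T → X t - X s = Y t - Y s := by
    have h0 := key_vanish T hT ω hω (fun s t => ‖(X t - X s) - (Y t - Y s)‖)
      (fun s t _ _ _ => norm_nonneg _)
      (fun s u t hs hsu hut ht => by
        have : (X t - X s) - (Y t - Y s)
            = ((X u - X s) - (Y u - Y s)) + ((X t - X u) - (Y t - Y u)) := by
          abel
        show ‖X t - X s - (Y t - Y s)‖ ≤ ‖X u - X s - (Y u - Y s)‖ + ‖X t - X u - (Y t - Y u)‖
        rw [this]; exact norm_add_le _ _)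
      C θ hC hθ h1
    intro s t hs hst ht
    exact sub_eq_zero.mp (norm_eq_zero.mp (h0 s t hs hst ht))
  have part1' : ∀ s t : ℝ, 0 ≤ s → s ≤ t → t ≤ T → ∀ α, X t α - X s α = Y t α - Y s α := by
    intro s t hs hst ht α
    have := part1 s t hs hst ht
    have := congrFun this α
    simpa [Pi.sub_apply] using this
  refine ⟨part1, ?_⟩
  have chenX := hX.2.2.2
  have chenY := hY.2.2.2
  have h0 := key_vanish T hT ω hω
    (fun s t => ‖(fun (α β : Fin d) => XX s t α β - YY s t α β)‖)
    (fun s t _ _ _ => norm_nonneg _)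
    (fun s u t hs hsu hut ht => by
      have hs0u : 0 ≤ u := hs.trans hsu
      have huT : u ≤ T := hut.trans ht
      have heq : (fun (α β : Fin d) => XX s t α β - YY s t α β)
          = (fun (α β : Fin d) => XX s u α β - YY s u α β)
            + (fun (α β : Fin d) => XX u t α β - YY u t α β) := by
        funext α β
        have hx := chenX s u t hs hsu hut ht α β
        have hy := chenY s u t hs hsu hut ht α β
        have e1 : X u α - X s α = Y u α - Y s α := part1' s u hs hsu huT α
        have e2 : X t β - X u β = Y t β - Y u β := part1' u t hs0u hut ht β
        simp only [Pi.add_apply]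
        rw [hx, hy, e1, e2]; ring
      show ‖(fun (α β : Fin d) => XX s t α β - YY s t α β)‖ ≤
          ‖(fun (α β : Fin d) => XX s u α β - YY s u α β)‖ +
          ‖(fun (α β : Fin d) => XX u t α β - YY u t α β)‖
      rw [heq]; exact norm_add_le _ _)
    C θ hC hθ h2
  intro s t hs hst ht
  have hz := norm_eq_zero.mp (h0 s t hs hst ht)
  funext α β
  have := congrFun (congrFun hz α) β
  simp only [Pi.zero_apply] at this
  linarith
end
end

section
/- Let ω be a control on [0,T] and Ξ : Δ_T → ℝ^e a function for which there are constants C ≥ 0 and θ > 1 with |Ξ_{st} − Ξ_{su} − Ξ_{ut}| ≤ C ω(s,t)^θ for all 0 ≤ s ≤ u ≤ t ≤ T. Then there exists a unique function I : Δ_T → ℝ^e such that I_{st} = I_{su} + I_{ut} for all 0 ≤ s ≤ u ≤ t ≤ T and |I_{st} − Ξ_{st}| ≤ C' ω(s,t)^θ for some constant C'. Moreover, for every 0 ≤ s ≤ t ≤ T and every sequence (π_n) of partitions of [s,t] with mesh tending to 0, I_{st} = lim_{n→∞} Σ_{[u,v]∈π_n} Ξ_{uv}. -/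
open Filter Topology Set

noncomputable section

namespace Sew

/-- monotone up to index `n` -/
def monoOn (n : ℕ) (p : ℕ → ℝ) : Prop := ∀ ⦃i j : ℕ⦄, i ≤ j → j ≤ n → p i ≤ p j

variable {T θ C : ℝ} {ω : ℝ → ℝ → ℝ} {e : ℕ} {Ξ : ℝ → ℝ → Fin e → ℝ}

/-- partition Riemann sum, raw form -/
def S (Ξ : ℝ → ℝ → Fin e → ℝ) (n : ℕ) (p : ℕ → ℝ) : Fin e → ℝ :=
  ∑ i ∈ Finset.range n, Ξ (p i) (p (i+1))

/-- sum of ω^θ over intervals -/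
def W (ω : ℝ → ℝ → ℝ) (θ : ℝ) (n : ℕ) (p : ℕ → ℝ) : ℝ :=
  ∑ i ∈ Finset.range n, ω (p i) (p (i+1)) ^ θ

section control
variable (hω : IsControl T ω)
include hω

lemma om_nonneg {s t : ℝ} (h0 : 0 ≤ s) (h1 : s ≤ t) (h2 : t ≤ T) : 0 ≤ ω s t :=
  hω.2.2.2 s t h0 h1 h2

lemma om_mono {a' a b b' : ℝ} (h0 : 0 ≤ a') (h1 : a' ≤ a) (h2 : a ≤ b) (h3 : b ≤ b')
    (h4 : b' ≤ T) : ω a b ≤ ω a' b' := by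
  have e1 := hω.2.2.1 a' a b' h0 h1 (h2.trans h3) h4
  have e2 := hω.2.2.1 a b b' (h0.trans h1) h2 h3 h4
  have n1 := om_nonneg hω h0 h1 (((h2.trans h3).trans h4))
  have n2 := om_nonneg hω ((h0.trans h1).trans h2) h3 h4
  linarith

lemma chain (n : ℕ) (p : ℕ → ℝ) (hp : monoOn n p) (h0 : 0 ≤ p 0) (h1 : p n ≤ T) :
    ∑ i ∈ Finset.range n, ω (p i) (p (i+1)) ≤ ω (p 0) (p n) := by
  induction n with
  | zero => simp [hω.2.1 (p 0) h0 (le_trans (hp (le_refl 0) (le_refl 0)) h1)]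
  | succ n ih =>
    have hp' : monoOn n p := fun i j hij hj => hp hij (hj.trans n.le_succ)
    have h1' : p n ≤ T := (hp n.le_succ le_rfl).trans h1
    have key := hω.2.2.1 (p 0) (p n) (p (n+1)) h0 (hp (Nat.zero_le n) n.le_succ)
      (hp n.le_succ le_rfl) h1
    rw [Finset.sum_range_succ]
    linarith [ih hp' h1']

end control

noncomputable def PS (θ : ℝ) (n : ℕ) : ℝ := ∑ k ∈ Finset.range n, ((k:ℝ)+1) ^ (-θ)
noncomputable def Zc (θ : ℝ) : ℝ := ∑' k : ℕ, ((k:ℝ)+1) ^ (-θ)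

lemma summable_aux (hθ : 1 < θ) : Summable (fun k : ℕ => ((k:ℝ)+1) ^ (-θ)) := by
  have h1 : Summable (fun n : ℕ => (n:ℝ) ^ (-θ)) := by
    rw [Real.summable_nat_rpow]; linarith
  have h2 := (summable_nat_add_iff 1).2 h1
  convert h2 using 2 with k
  · rfl
  · norm_cast

lemma PS_nonneg (θ : ℝ) (n : ℕ) : 0 ≤ PS θ n :=
  Finset.sum_nonneg fun k _ => Real.rpow_nonneg (by positivity) _

lemma PS_le_Zc (hθ : 1 < θ) (n : ℕ) : PS θ n ≤ Zc θ :=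
  Summable.sum_le_tsum _ (fun k _ => Real.rpow_nonneg (by positivity) _) (summable_aux hθ)

lemma Zc_nonneg (hθ : 1 < θ) : 0 ≤ Zc θ := (PS_nonneg θ 0).trans (PS_le_Zc hθ 0)

section maximal
variable (hω : IsControl T ω) (hC : 0 ≤ C) (hθ : 1 < θ)
  (hΞ : ∀ s u t : ℝ, 0 ≤ s → s ≤ u → u ≤ t → t ≤ T →
      ‖Ξ s t - Ξ s u - Ξ u t‖ ≤ C * ω s t ^ θ)
include hω hC hθ hΞ

lemma xi_diag {u : ℝ} (h0 : 0 ≤ u) (h1 : u ≤ T) : Ξ u u = 0 := by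
  have h := hΞ u u u h0 le_rfl le_rfl h1
  rw [hω.2.1 u h0 h1, Real.zero_rpow (by linarith)] at h
  simp only [mul_zero] at h
  have : ‖Ξ u u‖ ≤ 0 := by
    have : Ξ u u - Ξ u u - Ξ u u = -Ξ u u := by abel
    rw [this, norm_neg] at h; exact h
  simpa using le_antisymm this (norm_nonneg _)

lemma maximal_aux : ∀ N : ℕ, ∀ p : ℕ → ℝ, monoOn (N+1) p → 0 ≤ p 0 → p (N+1) ≤ T →
    ‖S Ξ (N+1) p - Ξ (p 0) (p (N+1))‖ ≤ C * 2^θ * PS θ N * ω (p 0) (p (N+1)) ^ θ := by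
  intro N
  induction N with
  | zero =>
    intro p hp h0 h1
    simp [S, PS]
  | succ N ih =>
    intro p hp h0 h1
    -- setup
    set Ω := ω (p 0) (p (N+2)) with hΩdef
    have hle : ∀ i j : ℕ, i ≤ j → j ≤ N+2 → p i ≤ p j := fun i j h h' => hp h h'
    have hT0 : ∀ i, i ≤ N+2 → 0 ≤ p i := fun i hi => h0.trans (hle 0 i (Nat.zero_le _) hi)
    have hT1 : ∀ i, i ≤ N+2 → p i ≤ T := fun i hi => (hle i (N+2) hi le_rfl).trans h1
    have hΩ0 : 0 ≤ Ω := om_nonneg hω h0 (hle 0 (N+2) (Nat.zero_le _) le_rfl) h1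
    set M := (N+2)/2 with hMdef
    have hM1 : 1 ≤ M := by omega
    have h2M : 2*M ≤ N+2 := by omega
    have hN2M : N+1 ≤ 2*M := by omega
    -- chain bound on even points
    have hchain : ∑ j ∈ Finset.range M, ω (p (2*j)) (p (2*j+2)) ≤ Ω := by
      have hq : monoOn M (fun j => p (2*j)) := fun i j hij hj =>
        hle _ _ (by omega) (by omega)
      have := chain hω M (fun j => p (2*j)) hq (hT0 0 (by omega)) (hT1 (2*M) h2M)
      have heq : ∑ j ∈ Finset.range M, ω (p (2*j)) (p (2*(j+1)))
          = ∑ j ∈ Finset.range M, ω (p (2*j)) (p (2*j+2)) := by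
        apply Finset.sum_congr rfl; intro j _
        have h2j : 2*(j+1) = 2*j+2 := by ring
        rw [h2j]
      rw [heq] at this
      exact this.trans (om_mono hω (hT0 0 (by omega)) le_rfl
        (hle 0 (2*M) (by omega) h2M) (hle (2*M) (N+2) h2M le_rfl) h1)
    -- select a point with small enlarged interval
    have hsel : ∃ j ∈ Finset.range M, ω (p (2*j)) (p (2*j+2)) ≤ Ω / M := by
      apply Finset.exists_le_of_sum_le ⟨0, Finset.mem_range.2 (by omega)⟩
      rw [Finset.sum_const, Finset.card_range, nsmul_eq_mul]
      rw [mul_div_cancel₀]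
      · exact hchain
      · exact_mod_cast (by omega : M ≠ 0)
    obtain ⟨j, hjM, hjsmall⟩ := hsel
    have hjM' : j < M := Finset.mem_range.1 hjM
    set m := 2*j with hmdef
    have hmN : m + 1 ≤ N + 1 := by omega
    -- removed partition
    set p' : ℕ → ℝ := fun k => if k < m+1 then p k else p (k+1) with hp'def
    have hp'mono : monoOn (N+1) p' := by
      intro a b hab hb
      simp only [hp'def]
      split <;> split <;> (apply hle <;> omega)
    have hp'0 : p' 0 = p 0 := by simp [hp'def]
    have hp'N : p' (N+1) = p (N+2) := by
      simp only [hp'def]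
      rw [if_neg (by omega)]
    -- sum identity
    have e1 : S Ξ (N+2) p = (∑ k ∈ Finset.range m, Ξ (p k) (p (k+1)))
        + Ξ (p m) (p (m+1)) + Ξ (p (m+1)) (p (m+2))
        + ∑ k ∈ Finset.Ico (m+2) (N+2), Ξ (p k) (p (k+1)) := by
      unfold S
      rw [Finset.range_eq_Ico,
        ← Finset.sum_Ico_consecutive (fun k => Ξ (p k) (p (k+1))) (by omega : 0 ≤ m+2)
          (by omega : m+2 ≤ N+2),
        Finset.sum_Ico_succ_top (by omega : 0 ≤ m+1),
        Finset.sum_Ico_succ_top (by omega : 0 ≤ m), ← Finset.range_eq_Ico]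
    have e2 : S Ξ (N+1) p' = (∑ k ∈ Finset.range m, Ξ (p k) (p (k+1)))
        + Ξ (p m) (p (m+2))
        + ∑ k ∈ Finset.Ico (m+2) (N+2), Ξ (p k) (p (k+1)) := by
      unfold S
      rw [Finset.range_eq_Ico,
        ← Finset.sum_Ico_consecutive (fun k => Ξ (p' k) (p' (k+1))) (by omega : 0 ≤ m+1)
          (by omega : m+1 ≤ N+1),
        Finset.sum_Ico_succ_top (by omega : 0 ≤ m), ← Finset.range_eq_Ico]
      congr 1
      · congr 1
        · apply Finset.sum_congr rfl
          intro k hk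
          have hk' := Finset.mem_range.1 hk
          simp only [hp'def]
          rw [if_pos (by omega), if_pos (by omega)]
        · simp only [hp'def]
          rw [if_pos (by omega), if_neg (by omega)]
      · rw [Finset.sum_Ico_eq_sum_range, Finset.sum_Ico_eq_sum_range]
        have hlen : N+1 - (m+1) = N+2 - (m+2) := by omega
        rw [hlen]
        apply Finset.sum_congr rfl
        intro r _
        simp only [hp'def]
        have hx1 : m+1+r+1 = m+2+r := by omega
        rw [if_neg (by omega), if_neg (by omega), hx1]
    have keyid : S Ξ (N+2) p - Ξ (p 0) (p (N+2))
        = (S Ξ (N+1) p' - Ξ (p 0) (p (N+2)))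
          - (Ξ (p m) (p (m+2)) - Ξ (p m) (p (m+1)) - Ξ (p (m+1)) (p (m+2))) := by
      rw [e1, e2]; abel
    -- estimates
    have hdef : ‖Ξ (p m) (p (m+2)) - Ξ (p m) (p (m+1)) - Ξ (p (m+1)) (p (m+2))‖
        ≤ C * ω (p m) (p (m+2)) ^ θ :=
      hΞ _ _ _ (hT0 m (by omega)) (hle m (m+1) (by omega) (by omega))
        (hle (m+1) (m+2) (by omega) (by omega)) (hT1 (m+2) (by omega))
    have hsmall : C * ω (p m) (p (m+2)) ^ θ ≤ C * 2^θ * ((N:ℝ)+1) ^ (-θ) * Ω ^ θ := by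
      have hωm0 : 0 ≤ ω (p m) (p (m+2)) := om_nonneg hω (hT0 m (by omega))
        (hle m (m+2) (by omega) (by omega)) (hT1 (m+2) (by omega))
      have hMpos : (0:ℝ) < M := by exact_mod_cast (by omega : 0 < M)
      have h1' : ω (p m) (p (m+2)) ^ θ ≤ (Ω / M) ^ θ :=
        Real.rpow_le_rpow hωm0 hjsmall (by linarith)
      have h2' : (Ω / M) ^ θ ≤ 2^θ * ((N:ℝ)+1) ^ (-θ) * Ω ^ θ := by
        have hNpos : (0:ℝ) < (N:ℝ)+1 := by positivity
        have hMθ : (0:ℝ) < (M:ℝ)^θ := Real.rpow_pos_of_pos hMpos θ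
        have hNθ : (0:ℝ) < ((N:ℝ)+1)^θ := Real.rpow_pos_of_pos hNpos θ
        have hΩθ : 0 ≤ Ω^θ := Real.rpow_nonneg hΩ0 θ
        have key : ((N:ℝ)+1)^θ ≤ 2^θ * (M:ℝ)^θ := by
          have hc : ((N:ℝ)+1) ≤ 2*(M:ℝ) := by exact_mod_cast hN2M
          calc ((N:ℝ)+1)^θ ≤ (2*(M:ℝ))^θ :=
                Real.rpow_le_rpow (by positivity) hc (by linarith)
            _ = 2^θ * (M:ℝ)^θ := Real.mul_rpow (by norm_num) hMpos.le
        rw [Real.div_rpow hΩ0 (le_of_lt hMpos), Real.rpow_neg hNpos.le]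
        rw [div_le_iff₀ hMθ, show 2^θ * (((N:ℝ)+1)^θ)⁻¹ * Ω^θ * (M:ℝ)^θ
          = (2^θ * Ω^θ * (M:ℝ)^θ) / (((N:ℝ)+1)^θ) by ring, le_div_iff₀ hNθ]
        nlinarith [mul_le_mul_of_nonneg_left key hΩθ]
      calc C * ω (p m) (p (m+2)) ^ θ ≤ C * (Ω / M) ^ θ := by
            exact mul_le_mul_of_nonneg_left h1' hC
        _ ≤ C * (2^θ * ((N:ℝ)+1) ^ (-θ) * Ω ^ θ) := mul_le_mul_of_nonneg_left h2' hC
        _ = C * 2^θ * ((N:ℝ)+1) ^ (-θ) * Ω ^ θ := by ring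
    have hih := ih p' hp'mono (by rw [hp'0]; exact h0) (by rw [hp'N]; exact h1)
    rw [hp'0, hp'N] at hih
    have htot : ‖S Ξ (N+2) p - Ξ (p 0) (p (N+2))‖
        ≤ C * 2^θ * PS θ N * Ω ^ θ + C * 2^θ * ((N:ℝ)+1) ^ (-θ) * Ω ^ θ := by
      rw [keyid]
      refine (norm_sub_le _ _).trans (add_le_add hih ?_)
      exact hdef.trans hsmall
    have hPS : PS θ (N+1) = PS θ N + ((N:ℝ)+1) ^ (-θ) := by
      unfold PS; rw [Finset.sum_range_succ]
    calc ‖S Ξ (N+2) p - Ξ (p 0) (p (N+2))‖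
        ≤ C * 2^θ * PS θ N * Ω ^ θ + C * 2^θ * ((N:ℝ)+1) ^ (-θ) * Ω ^ θ := htot
      _ = C * 2^θ * PS θ (N+1) * Ω ^ θ := by rw [hPS]; ring

lemma maximal (n : ℕ) (p : ℕ → ℝ) (hp : monoOn n p) (h0 : 0 ≤ p 0) (h1 : p n ≤ T) :
    ‖S Ξ n p - Ξ (p 0) (p n)‖ ≤ C * 2^θ * Zc θ * ω (p 0) (p n) ^ θ := by
  have hωnn : 0 ≤ ω (p 0) (p n) := om_nonneg hω h0 (hp (Nat.zero_le n) le_rfl) h1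
  match n with
  | 0 =>
    rw [show S Ξ 0 p = 0 from rfl, xi_diag hω hC hθ hΞ h0 h1, hω.2.1 (p 0) h0 h1,
      Real.zero_rpow (by linarith), mul_zero]
    simp
  | Nat.succ N =>
    refine (maximal_aux hω hC hθ hΞ N p hp h0 h1).trans ?_
    have : C * 2^θ * PS θ N ≤ C * 2^θ * Zc θ := by
      apply mul_le_mul_of_nonneg_left (PS_le_Zc hθ N)
      positivity
    exact mul_le_mul_of_nonneg_right this (Real.rpow_nonneg hωnn θ)

end maximal

section coarsen
variable (hω : IsControl T ω) (hC : 0 ≤ C) (hθ : 1 < θ)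
  (hΞ : ∀ s u t : ℝ, 0 ≤ s → s ≤ u → u ≤ t → t ≤ T →
      ‖Ξ s t - Ξ s u - Ξ u t‖ ≤ C * ω s t ^ θ)
include hω hC hθ hΞ

lemma coarsen (n : ℕ) (p : ℕ → ℝ) (N : ℕ) (q : ℕ → ℝ) (j : ℕ → ℕ)
    (hpm : monoOn n p) (hqm : monoOn N q) (hq0 : 0 ≤ q 0) (hqT : q N ≤ T)
    (hjm : ∀ i i' : ℕ, i ≤ i' → i' ≤ n → j i ≤ j i') (hj0 : j 0 = 0) (hjn : j n = N)
    (hqj : ∀ i, i ≤ n → q (j i) = p i) :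
    ‖S Ξ N q - S Ξ n p‖ ≤ C * 2^θ * Zc θ * W ω θ n p := by
  have hjle : ∀ i, i ≤ n → j i ≤ N := fun i hi => hjn ▸ hjm i n hi le_rfl
  set B : ℕ → Fin e → ℝ :=
    fun i => ∑ k ∈ Finset.Ico (j i) (j (i+1)), Ξ (q k) (q (k+1)) with hBdef
  have hdecomp : ∀ l, l ≤ n → ∑ i ∈ Finset.range l, B i
      = ∑ k ∈ Finset.Ico (j 0) (j l), Ξ (q k) (q (k+1)) := by
    intro l hl
    induction l with
    | zero => simp
    | succ l ih =>
      rw [Finset.sum_range_succ, ih (by omega), hBdef,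
        Finset.sum_Ico_consecutive _ (hjm 0 l (Nat.zero_le _) (by omega))
          (hjm l (l+1) (by omega) hl)]
  have hSq : S Ξ N q = ∑ i ∈ Finset.range n, B i := by
    rw [hdecomp n le_rfl, hj0, hjn, ← Finset.range_eq_Ico]; rfl
  have hblock : ∀ i, i < n → ‖B i - Ξ (p i) (p (i+1))‖
      ≤ C * 2^θ * Zc θ * ω (p i) (p (i+1)) ^ θ := by
    intro i hi
    set n' := j (i+1) - j i with hn'def
    set pts : ℕ → ℝ := fun r => q (min (j i + r) (j (i+1))) with hptsdef
    have hji : j i ≤ j (i+1) := hjm i (i+1) (by omega) hi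
    have hjiN : j (i+1) ≤ N := hjle (i+1) hi
    have hpts0 : pts 0 = p i := by
      simp only [hptsdef, Nat.add_zero, min_eq_left hji]
      exact hqj i (by omega)
    have hptsn : pts n' = p (i+1) := by
      simp only [hptsdef, hn'def]
      rw [min_eq_right (by omega)]
      exact hqj (i+1) hi
    have hptsm : monoOn n' pts := by
      intro a b hab hb
      simp only [hptsdef]
      exact hqm (by omega) (by omega)
    have hS : S Ξ n' pts = B i := by
      rw [hBdef]
      simp only
      rw [Finset.sum_Ico_eq_sum_range]
      apply Finset.sum_congr rfl
      intro r hr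
      have hr' := Finset.mem_range.1 hr
      simp only [hptsdef]
      rw [min_eq_left (by omega), min_eq_left (by omega),
        show j i + (r+1) = j i + r + 1 by omega]
    have := maximal hω hC hθ hΞ n' pts hptsm
      (by rw [hpts0]; exact hq0.trans (hqm (Nat.zero_le _) (hjle i (by omega)) |>.trans_eq (hqj i (by omega))) |>.trans_eq' rfl)
      (by rw [hptsn, ← hqj (i+1) hi]; exact (hqm hjiN le_rfl).trans hqT)
    rw [hS, hpts0, hptsn] at this
    exact this
  have hsplit : S Ξ N q - S Ξ n p
      = ∑ i ∈ Finset.range n, (B i - Ξ (p i) (p (i+1))) := by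
    rw [hSq, Finset.sum_sub_distrib]; rfl
  rw [hsplit]
  calc ‖∑ i ∈ Finset.range n, (B i - Ξ (p i) (p (i+1)))‖
      ≤ ∑ i ∈ Finset.range n, ‖B i - Ξ (p i) (p (i+1))‖ := norm_sum_le _ _
    _ ≤ ∑ i ∈ Finset.range n, C * 2^θ * Zc θ * ω (p i) (p (i+1)) ^ θ :=
        Finset.sum_le_sum fun i hi => hblock i (Finset.mem_range.1 hi)
    _ = C * 2^θ * Zc θ * W ω θ n p := by rw [W, Finset.mul_sum]

lemma merge {s t : ℝ} (h0 : 0 ≤ s) (h1 : t ≤ T)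
    (n : ℕ) (p : ℕ → ℝ) (n' : ℕ) (p' : ℕ → ℝ)
    (hp : monoOn n p) (hp' : monoOn n' p')
    (hps : p 0 = s) (hpt : p n = t) (hp's : p' 0 = s) (hp't : p' n' = t) :
    ‖S Ξ n p - S Ξ n' p'‖ ≤ C * 2^θ * Zc θ * (W ω θ n p + W ω θ n' p') := by
  classical
  set Q : Finset ℝ := ((Finset.range (n+1)).image p) ∪ ((Finset.range (n'+1)).image p')
    with hQdef
  have hsQ : s ∈ Q := by
    apply Finset.mem_union_left
    exact Finset.mem_image.2 ⟨0, Finset.mem_range.2 (by omega), hps⟩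
  have htQ : t ∈ Q := by
    apply Finset.mem_union_left
    exact Finset.mem_image.2 ⟨n, Finset.mem_range.2 (by omega), hpt⟩
  have hQmem : ∀ x ∈ Q, s ≤ x ∧ x ≤ t := by
    intro x hx
    rcases Finset.mem_union.1 hx with h | h
    · obtain ⟨i, hi, rfl⟩ := Finset.mem_image.1 h
      have hi' := Finset.mem_range.1 hi
      exact ⟨hps ▸ hp (Nat.zero_le i) (by omega), hpt ▸ hp (by omega : i ≤ n) le_rfl⟩
    · obtain ⟨i, hi, rfl⟩ := Finset.mem_image.1 h
      have hi' := Finset.mem_range.1 hi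
      exact ⟨hp's ▸ hp' (Nat.zero_le i) (by omega), hp't ▸ hp' (by omega : i ≤ n') le_rfl⟩
  have hQpos : 0 < Q.card := Finset.card_pos.2 ⟨s, hsQ⟩
  set f := Q.orderIsoOfFin (rfl : Q.card = Q.card) with hfdef
  set N : ℕ := Q.card - 1 with hNdef
  have hNcard : N + 1 = Q.card := by omega
  set q : ℕ → ℝ := fun k => (f ⟨min k N, by omega⟩ : ℝ) with hqdef
  have hqm : ∀ ⦃a b : ℕ⦄, a ≤ b → q a ≤ q b := by
    intro a b hab
    exact Subtype.coe_le_coe.2 (f.monotone (by simp [Fin.le_def]; omega))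
  have hqQ : ∀ k, q k ∈ Q := fun k => (f _).2
  -- q 0 = s and q N = t
  have hq0 : q 0 = s := by
    have h1' : s ≤ q 0 := (hQmem _ (hqQ 0)).1
    have h2' : q 0 ≤ s := by
      have := f.monotone (show (⟨min 0 N, by omega⟩ : Fin Q.card) ≤ f.symm ⟨s, hsQ⟩ by
        simp [Fin.le_def])
      rw [OrderIso.apply_symm_apply] at this
      exact this
    linarith
  have hqN : q N = t := by
    have h1' : q N ≤ t := (hQmem _ (hqQ N)).2
    have h2' : t ≤ q N := by
      have := f.monotone (show f.symm ⟨t, htQ⟩ ≤ (⟨min N N, by omega⟩ : Fin Q.card) by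
        simp [Fin.le_def]; omega)
      rw [OrderIso.apply_symm_apply] at this
      exact this
    linarith
  -- the index maps
  have keyj : ∀ (m : ℕ) (r : ℕ → ℝ), monoOn m r → r 0 = s → r m = t →
      (∀ i, i ≤ m → r i ∈ Q) →
      ‖S Ξ N q - S Ξ m r‖ ≤ C * 2^θ * Zc θ * W ω θ m r := by
    intro m r hrm hr0 hrm' hrQ
    set j : ℕ → ℕ := fun i => (f.symm ⟨r (min i m), hrQ _ (min_le_right _ _)⟩ : ℕ)
      with hjdef
    have hjlt : ∀ i, j i < Q.card := fun i => (f.symm _).2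
    have hjm : ∀ i i' : ℕ, i ≤ i' → i' ≤ m → j i ≤ j i' := by
      intro i i' hii' hi'
      have : r (min i m) ≤ r (min i' m) := hrm (by omega) (by omega)
      exact f.symm.monotone (Subtype.mk_le_mk.2 this)
    have hqj : ∀ i, i ≤ m → q (j i) = r i := by
      intro i hi
      have hjN : j i ≤ N := by have := hjlt i; omega
      have hfin : (⟨min (j i) N, by omega⟩ : Fin Q.card)
          = f.symm ⟨r (min i m), hrQ _ (min_le_right _ _)⟩ := by
        apply Fin.ext
        show j i ⊓ N = _
        rw [min_eq_left hjN]
      simp only [hqdef]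
      rw [hfin, OrderIso.apply_symm_apply]
      simp [min_eq_left hi]
    have hj0 : j 0 = 0 := by
      have hinj : q (j 0) = s := by rw [hqj 0 (Nat.zero_le m)]; exact hr0
      by_contra hne
      have h1lt : 1 ≤ j 0 := by omega
      have hjN : j 0 ≤ N := by have := hjlt 0; omega
      have : q 0 ≤ q (j 0) := hqm (Nat.zero_le _)
      have h2' : q (j 0) ≤ q 0 := by rw [hinj, ← hq0]
      have heq : q (j 0) = q 0 := le_antisymm h2' this
      -- f is injective so j 0 = 0
      have : f ⟨min (j 0) N, by omega⟩ = f ⟨min 0 N, by omega⟩ := by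
        apply Subtype.ext
        exact heq
      have := f.injective this
      simp [Fin.ext_iff] at this
      omega
    have hjn : j m = N := by
      have hinj : q (j m) = t := by rw [hqj m le_rfl]; exact hrm'
      have hjN : j m ≤ N := by have := hjlt m; omega
      by_contra hne
      have heq : q (j m) = q N := by rw [hinj, hqN]
      have : f ⟨min (j m) N, by omega⟩ = f ⟨min N N, by omega⟩ := Subtype.ext heq
      have := f.injective this
      simp [Fin.ext_iff] at this
      omega
    exact coarsen hω hC hθ hΞ m r N q j hrm (fun a b hab hb => hqm hab)
      (by rw [hq0]; exact h0) (by rw [hqN]; exact h1) hjm hj0 hjn hqj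
  have b1 := keyj n p hp hps hpt (fun i hi => Finset.mem_union_left _
    (Finset.mem_image.2 ⟨i, Finset.mem_range.2 (by omega), rfl⟩))
  have b2 := keyj n' p' hp' hp's hp't (fun i hi => Finset.mem_union_right _
    (Finset.mem_image.2 ⟨i, Finset.mem_range.2 (by omega), rfl⟩))
  calc ‖S Ξ n p - S Ξ n' p'‖
      ≤ ‖S Ξ N q - S Ξ n p‖ + ‖S Ξ N q - S Ξ n' p'‖ := by
        rw [← norm_neg (S Ξ N q - S Ξ n p)]
        refine le_trans (by rw [show S Ξ n p - S Ξ n' p'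
          = -(S Ξ N q - S Ξ n p) + (S Ξ N q - S Ξ n' p') by abel]) (norm_add_le _ _)
    _ ≤ C * 2^θ * Zc θ * W ω θ n p + C * 2^θ * Zc θ * W ω θ n' p' := add_le_add b1 b2
    _ = C * 2^θ * Zc θ * (W ω θ n p + W ω θ n' p') := by ring

end coarsen

lemma modulus (hω : IsControl T ω) (hT : 0 ≤ T) :
    ∀ ε > 0, ∃ δ > 0, ∀ u v : ℝ, 0 ≤ u → u ≤ v → v ≤ T → v - u < δ → ω u v < ε := by
  intro ε hε
  have hKc : IsCompact {q : ℝ × ℝ | 0 ≤ q.1 ∧ q.1 ≤ q.2 ∧ q.2 ≤ T} := by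
    apply IsCompact.of_isClosed_subset
      (isCompact_Icc.prod isCompact_Icc : IsCompact (Set.Icc (0:ℝ) T ×ˢ Set.Icc (0:ℝ) T))
    · have heq : {q : ℝ × ℝ | 0 ≤ q.1 ∧ q.1 ≤ q.2 ∧ q.2 ≤ T}
          = {q : ℝ × ℝ | 0 ≤ q.1} ∩ ({q : ℝ × ℝ | q.1 ≤ q.2} ∩ {q : ℝ × ℝ | q.2 ≤ T}) := rfl
      rw [heq]
      exact (isClosed_le continuous_const continuous_fst).inter
        ((isClosed_le continuous_fst continuous_snd).inter
          (isClosed_le continuous_snd continuous_const))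
    · rintro ⟨x, y⟩ ⟨h1, h2, h3⟩
      exact ⟨⟨h1, h2.trans h3⟩, ⟨h1.trans h2, h3⟩⟩
  have huc := hKc.uniformContinuousOn_of_continuous hω.1
  rw [Metric.uniformContinuousOn_iff] at huc
  obtain ⟨δ, hδ, hd⟩ := huc ε hε
  refine ⟨δ, hδ, fun u v h0 h1 h2 h3 => ?_⟩
  have hm1 : ((u, v) : ℝ × ℝ) ∈ {q : ℝ × ℝ | 0 ≤ q.1 ∧ q.1 ≤ q.2 ∧ q.2 ≤ T} := ⟨h0, h1, h2⟩
  have hm2 : ((u, u) : ℝ × ℝ) ∈ {q : ℝ × ℝ | 0 ≤ q.1 ∧ q.1 ≤ q.2 ∧ q.2 ≤ T} :=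
    ⟨h0, le_rfl, h1.trans h2⟩
  have hdist : dist ((u, v) : ℝ × ℝ) ((u, u) : ℝ × ℝ) < δ := by
    rw [Prod.dist_eq]
    simp only [dist_self]
    rw [max_eq_right dist_nonneg, Real.dist_eq, abs_of_nonneg (by linarith)]
    linarith
  have := hd _ hm1 _ hm2 hdist
  simp only at this
  rw [hω.2.1 u h0 (h1.trans h2), Real.dist_eq, sub_zero] at this
  calc ω u v ≤ |ω u v| := le_abs_self _
    _ < ε := this

lemma rpow_split (hθ : 1 < θ) {x y : ℝ} (hx : 0 ≤ x) (hxy : x ≤ y) :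
    x ^ θ ≤ y ^ (θ - 1) * x := by
  rcases eq_or_lt_of_le hx with h | h
  · rw [← h, Real.zero_rpow (by linarith), mul_zero]
  · have hxθ : x ^ θ = x ^ (θ - 1) * x := by
      rw [← Real.rpow_add_one h.ne', sub_add_cancel]
    rw [hxθ]
    exact mul_le_mul_of_nonneg_right
      (Real.rpow_le_rpow hx hxy (by linarith)) hx

lemma W_nonneg (hω : IsControl T ω) (n : ℕ) (p : ℕ → ℝ)
    (hp : monoOn n p) (h0 : 0 ≤ p 0) (h1 : p n ≤ T) : 0 ≤ W ω θ n p := by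
  apply Finset.sum_nonneg
  intro i hi
  have hi' := Finset.mem_range.1 hi
  exact Real.rpow_nonneg (om_nonneg hω (h0.trans (hp (Nat.zero_le _) (by omega)))
    (hp (by omega : i ≤ i+1) (by omega)) ((hp (by omega : i+1 ≤ n) le_rfl).trans h1)) _

lemma Wsmall (hω : IsControl T ω) (hθ : 1 < θ) (hT : 0 ≤ T) :
    ∀ ε > 0, ∃ δ > 0, ∀ (n : ℕ) (p : ℕ → ℝ), monoOn n p → 0 ≤ p 0 → p n ≤ T →
      (∀ i, i < n → p (i+1) - p i < δ) → W ω θ n p < ε := by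
  intro ε hε
  have hωT : 0 ≤ ω 0 T := om_nonneg hω le_rfl hT le_rfl
  set A := ω 0 T + 1 with hAdef
  have hA : 0 < A := by linarith
  set ε' := min 1 ((ε / A) ^ (1 / (θ - 1))) with hε'def
  have hε'pos : 0 < ε' := lt_min one_pos (Real.rpow_pos_of_pos (by positivity) _)
  have hpow : ε' ^ (θ - 1) ≤ ε / A := by
    calc ε' ^ (θ - 1) ≤ ((ε / A) ^ (1 / (θ - 1))) ^ (θ - 1) :=
          Real.rpow_le_rpow hε'pos.le (min_le_right _ _) (by linarith)
      _ = ε / A := by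
          rw [← Real.rpow_mul (by positivity : (0:ℝ) ≤ ε / A),
            one_div_mul_cancel (by linarith : θ - 1 ≠ 0), Real.rpow_one]
  obtain ⟨δ, hδ, hmod⟩ := modulus hω hT ε' hε'pos
  refine ⟨δ, hδ, fun n p hp h0 h1 hlen => ?_⟩
  have hbd : ∀ i, i < n → ω (p i) (p (i+1)) ^ θ ≤ ε' ^ (θ-1) * ω (p i) (p (i+1)) := by
    intro i hi
    have hb0 : 0 ≤ p i := h0.trans (hp (Nat.zero_le _) (by omega))
    have hb1 : p i ≤ p (i+1) := hp (by omega : i ≤ i+1) (by omega)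
    have hb2 : p (i+1) ≤ T := (hp (by omega : i+1 ≤ n) le_rfl).trans h1
    exact rpow_split hθ (om_nonneg hω hb0 hb1 hb2)
      (hmod _ _ hb0 hb1 hb2 (hlen i hi)).le
  calc W ω θ n p ≤ ∑ i ∈ Finset.range n, ε' ^ (θ-1) * ω (p i) (p (i+1)) :=
        Finset.sum_le_sum fun i hi => hbd i (Finset.mem_range.1 hi)
    _ = ε' ^ (θ-1) * ∑ i ∈ Finset.range n, ω (p i) (p (i+1)) := by rw [Finset.mul_sum]
    _ ≤ ε' ^ (θ-1) * ω 0 T := by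
        apply mul_le_mul_of_nonneg_left _ (Real.rpow_nonneg hε'pos.le _)
        exact (chain hω n p hp h0 h1).trans
          (om_mono hω le_rfl h0 (hp (Nat.zero_le n) le_rfl) h1 le_rfl)
    _ ≤ (ε / A) * ω 0 T := mul_le_mul_of_nonneg_right hpow hωT
    _ < (ε / A) * A := by
        apply mul_lt_mul_of_pos_left _ (by positivity)
        linarith
    _ = ε := by field_simp

lemma concat_sum {α : Type*} [AddCommMonoid α] (g : ℝ → ℝ → α) (a b : ℕ) (p q : ℕ → ℝ)
    (hpq : p a = q 0) :
    ∑ i ∈ Finset.range (a+b),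
        g (if i ≤ a then p i else q (i-a)) (if i+1 ≤ a then p (i+1) else q (i+1-a))
      = ∑ i ∈ Finset.range a, g (p i) (p (i+1)) + ∑ r ∈ Finset.range b, g (q r) (q (r+1)) := by
  rw [Finset.range_eq_Ico, ← Finset.sum_Ico_consecutive _ (Nat.zero_le a) (by omega : a ≤ a+b),
    ← Finset.range_eq_Ico]
  congr 1
  · apply Finset.sum_congr rfl
    intro i hi
    have hi' := Finset.mem_range.1 hi
    rw [if_pos (by omega), if_pos (by omega)]
  · rw [Finset.sum_Ico_eq_sum_range]
    rw [show a + b - a = b by omega]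
    apply Finset.sum_congr rfl
    intro r _
    rcases Nat.eq_zero_or_pos r with hr | hr
    · subst hr
      simp only [Nat.add_zero]
      rw [if_pos le_rfl, if_neg (by omega), hpq, show a + 1 - a = 1 by omega]
    · rw [if_neg (by omega), if_neg (by omega), show a + r - a = r by omega,
        show a + r + 1 - a = r + 1 by omega]

/-- equal partition points -/
noncomputable def ep (s t : ℝ) (m : ℕ) : ℕ → ℝ :=
  fun i => s + (min i (m+1) : ℕ) * (t - s) / (m+1)

lemma ep_mono {s t : ℝ} (hst : s ≤ t) (m : ℕ) : ∀ ⦃i j : ℕ⦄, i ≤ j → ep s t m i ≤ ep s t m j := by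
  intro i j hij
  unfold ep
  have hmin : ((min i (m+1) : ℕ) : ℝ) ≤ ((min j (m+1) : ℕ) : ℝ) := by
    exact_mod_cast min_le_min_right _ hij
  have h3 : (0:ℝ) ≤ t - s := by linarith
  have hc : (0:ℝ) < (m:ℝ)+1 := by positivity
  gcongr

lemma ep_zero (s t : ℝ) (m : ℕ) : ep s t m 0 = s := by simp [ep]

lemma ep_last (s t : ℝ) (m : ℕ) : ep s t m (m+1) = t := by
  unfold ep
  rw [min_self]
  have : ((m:ℝ)+1) ≠ 0 := by positivity
  push_cast
  field_simp
  ring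

lemma ep_len {s t : ℝ} (m : ℕ) {i : ℕ} (hi : i < m+1) :
    ep s t m (i+1) - ep s t m i = (t - s) / (m+1) := by
  unfold ep
  rw [min_eq_left (by omega), min_eq_left (by omega)]
  push_cast
  ring

end Sew

/-- The sewing lemma: an almost-additive two-parameter function admits a
unique additive function at `O(ω^θ)`-distance, obtained as a limit of Riemann sums. -/
theorem statement3 (T : ℝ) (hT : 0 ≤ T) (e : ℕ)
    (ω : ℝ → ℝ → ℝ) (hω : IsControl T ω)
    (Ξ : ℝ → ℝ → Fin e → ℝ) (C θ : ℝ) (hC : 0 ≤ C) (hθ : 1 < θ)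
    (hΞ : ∀ s u t : ℝ, 0 ≤ s → s ≤ u → u ≤ t → t ≤ T →
      ‖Ξ s t - Ξ s u - Ξ u t‖ ≤ C * ω s t ^ θ) :
    ∃ I : ℝ → ℝ → Fin e → ℝ,
      ((∀ s u t : ℝ, 0 ≤ s → s ≤ u → u ≤ t → t ≤ T → I s t = I s u + I u t) ∧
        ∃ C' : ℝ, ∀ s t : ℝ, 0 ≤ s → s ≤ t → t ≤ T →
          ‖I s t - Ξ s t‖ ≤ C' * ω s t ^ θ) ∧
      (∀ J : ℝ → ℝ → Fin e → ℝ,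
        ((∀ s u t : ℝ, 0 ≤ s → s ≤ u → u ≤ t → t ≤ T → J s t = J s u + J u t) ∧
          ∃ C'' : ℝ, ∀ s t : ℝ, 0 ≤ s → s ≤ t → t ≤ T →
            ‖J s t - Ξ s t‖ ≤ C'' * ω s t ^ θ) →
        ∀ s t : ℝ, 0 ≤ s → s ≤ t → t ≤ T → J s t = I s t) ∧
      (∀ s t : ℝ, 0 ≤ s → s ≤ t → t ≤ T → RSumLimit s t Ξ (I s t)) := by
  classical
  set K := C * 2^θ * Sew.Zc θ with hKdef
  have hK : 0 ≤ K := by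
    have hZ := Sew.Zc_nonneg hθ
    exact mul_nonneg (mul_nonneg hC (Real.rpow_nonneg (by norm_num) θ)) hZ
  -- small W estimates for equal partitions
  have htendW : ∀ s t : ℝ, 0 ≤ s → s ≤ t → t ≤ T →
      ∀ ε > 0, ∀ᶠ m : ℕ in atTop, Sew.W ω θ (m+1) (Sew.ep s t m) < ε := by
    intro s t h0 h1 h2 ε hε
    obtain ⟨δ, hδ, hWs⟩ := Sew.Wsmall hω hθ hT ε hε
    have hlen : Tendsto (fun m : ℕ => (t - s)/((m:ℝ)+1)) atTop (𝓝 0) := by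
      have h' := (tendsto_const_div_atTop_nhds_zero_nat (t - s)).comp
        (tendsto_add_atTop_nat 1)
      convert h' using 2 with m
      push_cast [Function.comp]
      ring_nf
    filter_upwards [hlen.eventually_lt_const hδ] with m hm
    apply hWs (m+1) (Sew.ep s t m) (fun i j hij _ => Sew.ep_mono h1 m hij)
      (by rw [Sew.ep_zero]; exact h0) (by rw [Sew.ep_last]; exact h2)
    intro i hi
    rw [Sew.ep_len m hi]
    exact hm
  -- the approximating sequence is Cauchy
  have hcauchy : ∀ s t : ℝ, 0 ≤ s → s ≤ t → t ≤ T →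
      CauchySeq (fun m => Sew.S Ξ (m+1) (Sew.ep s t m)) := by
    intro s t h0 h1 h2
    rw [Metric.cauchySeq_iff]
    intro ε hε
    have hε2 : 0 < ε / (2*(K+1)) := by positivity
    obtain ⟨N, hN⟩ := eventually_atTop.1 (htendW s t h0 h1 h2 _ hε2)
    refine ⟨N, fun m hm m' hm' => ?_⟩
    rw [dist_eq_norm]
    have hb := Sew.merge hω hC hθ hΞ h0 h2 (m+1) (Sew.ep s t m) (m'+1) (Sew.ep s t m')
      (fun i j hij _ => Sew.ep_mono h1 m hij) (fun i j hij _ => Sew.ep_mono h1 m' hij)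
      (Sew.ep_zero s t m) (Sew.ep_last s t m) (Sew.ep_zero s t m') (Sew.ep_last s t m')
    have hWm := hN m hm
    have hWm' := hN m' hm'
    have hWnn1 : 0 ≤ Sew.W ω θ (m+1) (Sew.ep s t m) :=
      Sew.W_nonneg hω _ _ (fun i j hij _ => Sew.ep_mono h1 m hij)
        (by rw [Sew.ep_zero]; exact h0) (by rw [Sew.ep_last]; exact h2)
    have hWnn2 : 0 ≤ Sew.W ω θ (m'+1) (Sew.ep s t m') :=
      Sew.W_nonneg hω _ _ (fun i j hij _ => Sew.ep_mono h1 m' hij)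
        (by rw [Sew.ep_zero]; exact h0) (by rw [Sew.ep_last]; exact h2)
    have hKK : (0:ℝ) < K + 1 := by linarith
    calc ‖Sew.S Ξ (m+1) (Sew.ep s t m) - Sew.S Ξ (m'+1) (Sew.ep s t m')‖
        ≤ K * (Sew.W ω θ (m+1) (Sew.ep s t m) + Sew.W ω θ (m'+1) (Sew.ep s t m')) := hb
      _ ≤ K * (2 * (ε / (2*(K+1)))) := by
          apply mul_le_mul_of_nonneg_left _ hK
          linarith
      _ = ε * (K/(K+1)) := by field_simp
      _ < ε * 1 := by
          apply mul_lt_mul_of_pos_left _ hε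
          rw [div_lt_one hKK]; linarith
      _ = ε := mul_one ε
  set II : ℝ → ℝ → Fin e → ℝ := fun s t =>
    if h : 0 ≤ s ∧ s ≤ t ∧ t ≤ T then limUnder atTop (fun m => Sew.S Ξ (m+1) (Sew.ep s t m))
    else 0 with hIIdef
  have hlimI : ∀ s t : ℝ, 0 ≤ s → s ≤ t → t ≤ T →
      Tendsto (fun m => Sew.S Ξ (m+1) (Sew.ep s t m)) atTop (𝓝 (II s t)) := by
    intro s t h0 h1 h2
    have : II s t = limUnder atTop (fun m => Sew.S Ξ (m+1) (Sew.ep s t m)) := by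
      rw [hIIdef]; exact dif_pos ⟨h0, h1, h2⟩
    rw [this]
    exact (hcauchy s t h0 h1 h2).tendsto_limUnder
  -- the key estimate
  have hstar : ∀ s t : ℝ, 0 ≤ s → s ≤ t → t ≤ T → ∀ (n : ℕ) (p : ℕ → ℝ),
      Sew.monoOn n p → p 0 = s → p n = t →
      ‖Sew.S Ξ n p - II s t‖ ≤ K * Sew.W ω θ n p := by
    intro s t h0 h1 h2 n p hpm hp0 hpn
    refine le_of_forall_pos_le_add fun η hη => ?_
    have hη2 : 0 < η/(2*(K+1)) := by positivity
    have hev1 := htendW s t h0 h1 h2 _ hη2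
    obtain ⟨N2, hN2⟩ := Metric.tendsto_atTop.1 (hlimI s t h0 h1 h2) (η/2) (by positivity)
    obtain ⟨m, hm1, hm2⟩ := (hev1.and (eventually_atTop.2 ⟨N2, hN2⟩)).exists
    have hmerge := Sew.merge hω hC hθ hΞ h0 h2 n p (m+1) (Sew.ep s t m)
      hpm (fun i j hij _ => Sew.ep_mono h1 m hij) hp0 hpn
      (Sew.ep_zero s t m) (Sew.ep_last s t m)
    have htri := dist_triangle (Sew.S Ξ n p) (Sew.S Ξ (m+1) (Sew.ep s t m)) (II s t)
    rw [dist_eq_norm, dist_eq_norm, dist_eq_norm] at htri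
    have hKK : (0:ℝ) < K + 1 := by linarith
    have hsm : K * Sew.W ω θ (m+1) (Sew.ep s t m) ≤ η/2 := by
      have h1' : K * Sew.W ω θ (m+1) (Sew.ep s t m) ≤ K * (η/(2*(K+1))) :=
        mul_le_mul_of_nonneg_left hm1.le hK
      have h2' : K * (η/(2*(K+1))) ≤ η/2 := by
        rw [show K * (η/(2*(K+1))) = η/2 * (K/(K+1)) by field_simp]
        have hd : K/(K+1) ≤ 1 := by rw [div_le_one hKK]; linarith
        nlinarith
      linarith
    calc ‖Sew.S Ξ n p - II s t‖
        ≤ ‖Sew.S Ξ n p - Sew.S Ξ (m+1) (Sew.ep s t m)‖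
          + ‖Sew.S Ξ (m+1) (Sew.ep s t m) - II s t‖ := htri
      _ ≤ K * (Sew.W ω θ n p + Sew.W ω θ (m+1) (Sew.ep s t m)) + η/2 := by
          have h' := hm2
          rw [dist_eq_norm] at h'
          exact add_le_add hmerge h'.le
      _ = K * Sew.W ω θ n p + K * Sew.W ω θ (m+1) (Sew.ep s t m) + η/2 := by ring
      _ ≤ K * Sew.W ω θ n p + η := by linarith
  refine ⟨II, ⟨?_, ⟨K, ?_⟩⟩, ?_, ?_⟩
  · -- additivity
    intro s u t h0 h1 h2 h3
    set cp : ℕ → ℕ → ℝ := fun m i =>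
      if i ≤ m+1 then Sew.ep s u m i else Sew.ep u t m (i - (m+1)) with hcpdef
    have hcpm : ∀ m, Sew.monoOn ((m+1)+(m+1)) (cp m) := by
      intro m i j hij hj
      simp only [hcpdef]
      by_cases hi' : i ≤ m+1 <;> by_cases hj' : j ≤ m+1
      · rw [if_pos hi', if_pos hj']; exact Sew.ep_mono h1 m hij
      · rw [if_pos hi', if_neg hj']
        calc Sew.ep s u m i ≤ Sew.ep s u m (m+1) := Sew.ep_mono h1 m (by omega)
          _ = u := Sew.ep_last s u m
          _ = Sew.ep u t m 0 := (Sew.ep_zero u t m).symm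
          _ ≤ Sew.ep u t m (j - (m+1)) := Sew.ep_mono h2 m (by omega)
      · omega
      · rw [if_neg hi', if_neg hj']; exact Sew.ep_mono h2 m (by omega)
    have hcp0 : ∀ m, cp m 0 = s := by
      intro m; simp only [hcpdef]; rw [if_pos (by omega)]; exact Sew.ep_zero s u m
    have hcpl : ∀ m, cp m ((m+1)+(m+1)) = t := by
      intro m; simp only [hcpdef]; rw [if_neg (by omega), show (m+1)+(m+1)-(m+1) = m+1 by omega]
      exact Sew.ep_last u t m
    have hpq : ∀ m, Sew.ep s u m (m+1) = Sew.ep u t m 0 := by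
      intro m; rw [Sew.ep_last, Sew.ep_zero]
    have hS : ∀ m, Sew.S Ξ ((m+1)+(m+1)) (cp m)
        = Sew.S Ξ (m+1) (Sew.ep s u m) + Sew.S Ξ (m+1) (Sew.ep u t m) := by
      intro m
      have := Sew.concat_sum Ξ (m+1) (m+1) (Sew.ep s u m) (Sew.ep u t m) (hpq m)
      exact this
    have hW : ∀ m, Sew.W ω θ ((m+1)+(m+1)) (cp m)
        = Sew.W ω θ (m+1) (Sew.ep s u m) + Sew.W ω θ (m+1) (Sew.ep u t m) := by
      intro m
      have := Sew.concat_sum (fun x y => ω x y ^ θ) (m+1) (m+1)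
        (Sew.ep s u m) (Sew.ep u t m) (hpq m)
      exact this
    have ht1 : Tendsto (fun m => Sew.S Ξ (m+1) (Sew.ep s u m) + Sew.S Ξ (m+1) (Sew.ep u t m))
        atTop (𝓝 (II s u + II u t)) :=
      (hlimI s u h0 h1 (h2.trans h3)).add (hlimI u t (h0.trans h1) h2 h3)
    have ht2 : Tendsto (fun m => Sew.S Ξ (m+1) (Sew.ep s u m) + Sew.S Ξ (m+1) (Sew.ep u t m))
        atTop (𝓝 (II s t)) := by
      rw [Metric.tendsto_atTop]
      intro ε hε
      have hε' : 0 < ε/(2*(K+1)) := by positivity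
      have e1 := htendW s u h0 h1 (h2.trans h3) _ hε'
      have e2 := htendW u t (h0.trans h1) h2 h3 _ hε'
      obtain ⟨m0, hm0⟩ := eventually_atTop.1 (e1.and e2)
      refine ⟨m0, fun m hm => ?_⟩
      obtain ⟨ha, hb⟩ := hm0 m hm
      rw [dist_eq_norm, ← hS m]
      have hst := hstar s t h0 (h1.trans h2) h3 ((m+1)+(m+1)) (cp m) (hcpm m) (hcp0 m) (hcpl m)
      rw [hW m] at hst
      have hWnn1 : 0 ≤ Sew.W ω θ (m+1) (Sew.ep s u m) :=
        Sew.W_nonneg hω _ _ (fun i j hij _ => Sew.ep_mono h1 m hij)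
          (by rw [Sew.ep_zero]; exact h0) (by rw [Sew.ep_last]; exact (h2.trans h3))
      have hWnn2 : 0 ≤ Sew.W ω θ (m+1) (Sew.ep u t m) :=
        Sew.W_nonneg hω _ _ (fun i j hij _ => Sew.ep_mono h2 m hij)
          (by rw [Sew.ep_zero]; exact (h0.trans h1)) (by rw [Sew.ep_last]; exact h3)
      have hKK : (0:ℝ) < K + 1 := by linarith
      calc ‖Sew.S Ξ ((m+1)+(m+1)) (cp m) - II s t‖
          ≤ K * (Sew.W ω θ (m+1) (Sew.ep s u m) + Sew.W ω θ (m+1) (Sew.ep u t m)) := hst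
        _ ≤ K * (2 * (ε/(2*(K+1)))) := by
            apply mul_le_mul_of_nonneg_left _ hK
            linarith
        _ = ε * (K/(K+1)) := by field_simp
        _ < ε * 1 := by
            apply mul_lt_mul_of_pos_left _ hε
            rw [div_lt_one hKK]; linarith
        _ = ε := mul_one ε
    exact tendsto_nhds_unique ht2 ht1
  · -- distance bound, C' = K
    intro s t h0 h1 h2
    set p : ℕ → ℝ := fun i => if i = 0 then s else t with hpdef
    have hpm : Sew.monoOn 1 p := by
      intro i j hij hj
      have hcase : (i = 0 ∧ j = 0) ∨ (i = 0 ∧ j = 1) ∨ (i = 1 ∧ j = 1) := by omega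
      rcases hcase with ⟨rfl, rfl⟩ | ⟨rfl, rfl⟩ | ⟨rfl, rfl⟩ <;> simp [hpdef, h1]
    have := hstar s t h0 h1 h2 1 p hpm (by simp [hpdef]) (by simp [hpdef])
    rw [show Sew.S Ξ 1 p = Ξ s t by
        unfold Sew.S; rw [Finset.sum_range_one]; simp [hpdef],
      show Sew.W ω θ 1 p = ω s t ^ θ by
        unfold Sew.W; rw [Finset.sum_range_one]; simp [hpdef]] at this
    rw [norm_sub_rev] at this
    exact this
  · -- uniqueness
    rintro J ⟨hJadd, C'', hJb⟩ s t h0 h1 h2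
    have hJdiag : ∀ u : ℝ, 0 ≤ u → u ≤ T → J u u = 0 := by
      intro u hu0 hu1
      have := hJadd u u u hu0 le_rfl le_rfl hu1
      exact (left_eq_add.1 this)
    have hJchain : ∀ (n : ℕ) (p : ℕ → ℝ), Sew.monoOn n p → 0 ≤ p 0 → p n ≤ T →
        J (p 0) (p n) = ∑ i ∈ Finset.range n, J (p i) (p (i+1)) := by
      intro n
      induction n with
      | zero =>
        intro p hp h0' h1'
        rw [Finset.range_zero, Finset.sum_empty]
        exact hJdiag (p 0) h0' h1'
      | succ n ih =>
        intro p hp h0' h1'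
        have hmono' : Sew.monoOn n p := fun i j hij hj => hp hij (by omega)
        have hpnT : p n ≤ T := (hp (by omega : n ≤ n+1) le_rfl).trans h1'
        have hadd := hJadd (p 0) (p n) (p (n+1)) h0' (hp (Nat.zero_le n) (by omega))
          (hp (by omega : n ≤ n+1) le_rfl) h1'
        rw [Finset.sum_range_succ, ← ih p hmono' h0' hpnT]
        exact hadd
    have htendJ : Tendsto (fun m => Sew.S Ξ (m+1) (Sew.ep s t m)) atTop (𝓝 (J s t)) := by
      rw [Metric.tendsto_atTop]
      intro ε hε
      have hCC : (0:ℝ) < |C''| + 1 := by positivity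
      have hε' : 0 < ε/(|C''|+1) := by positivity
      obtain ⟨m0, hm0⟩ := eventually_atTop.1 (htendW s t h0 h1 h2 _ hε')
      refine ⟨m0, fun m hm => ?_⟩
      rw [dist_comm, dist_eq_norm]
      have hepm : Sew.monoOn (m+1) (Sew.ep s t m) := fun i j hij _ => Sew.ep_mono h1 m hij
      have hep0 : 0 ≤ Sew.ep s t m 0 := by rw [Sew.ep_zero]; exact h0
      have hepT : Sew.ep s t m (m+1) ≤ T := by rw [Sew.ep_last]; exact h2
      have hchain := hJchain (m+1) (Sew.ep s t m) hepm hep0 hepT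
      rw [Sew.ep_zero, Sew.ep_last] at hchain
      have hsplit : J s t - Sew.S Ξ (m+1) (Sew.ep s t m)
          = ∑ i ∈ Finset.range (m+1), (J (Sew.ep s t m i) (Sew.ep s t m (i+1))
              - Ξ (Sew.ep s t m i) (Sew.ep s t m (i+1))) := by
        rw [Finset.sum_sub_distrib, ← hchain]
        rfl
      rw [hsplit]
      calc ‖∑ i ∈ Finset.range (m+1), (J (Sew.ep s t m i) (Sew.ep s t m (i+1))
              - Ξ (Sew.ep s t m i) (Sew.ep s t m (i+1)))‖
          ≤ ∑ i ∈ Finset.range (m+1), ‖J (Sew.ep s t m i) (Sew.ep s t m (i+1))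
              - Ξ (Sew.ep s t m i) (Sew.ep s t m (i+1))‖ := norm_sum_le _ _
        _ ≤ ∑ i ∈ Finset.range (m+1),
              |C''| * ω (Sew.ep s t m i) (Sew.ep s t m (i+1)) ^ θ := by
            apply Finset.sum_le_sum
            intro i hi
            have hi' := Finset.mem_range.1 hi
            have hb0 : 0 ≤ Sew.ep s t m i := hep0.trans (hepm (Nat.zero_le i) (by omega))
            have hb1 : Sew.ep s t m i ≤ Sew.ep s t m (i+1) := hepm (by omega) (by omega)
            have hb2 : Sew.ep s t m (i+1) ≤ T := (hepm (by omega : i+1 ≤ m+1) le_rfl).trans hepT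
            refine (hJb _ _ hb0 hb1 hb2).trans ?_
            exact mul_le_mul_of_nonneg_right (le_abs_self C'')
              (Real.rpow_nonneg (Sew.om_nonneg hω hb0 hb1 hb2) _)
        _ = |C''| * Sew.W ω θ (m+1) (Sew.ep s t m) := by
            rw [Sew.W, ← Finset.mul_sum]
        _ ≤ |C''| * (ε/(|C''|+1)) :=
            mul_le_mul_of_nonneg_left (hm0 m hm).le (abs_nonneg _)
        _ = ε * (|C''|/(|C''|+1)) := by field_simp
        _ < ε * 1 := by
            apply mul_lt_mul_of_pos_left _ hε
            rw [div_lt_one hCC]; linarith [abs_nonneg C'']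
        _ = ε := mul_one ε
    exact tendsto_nhds_unique htendJ (hlimI s t h0 h1 h2)
  · -- Riemann sums
    intro s t h0 h1 h2
    intro π hmesh
    rw [Metric.tendsto_atTop]
    intro ε hε
    have hε' : 0 < ε/(K+1) := by positivity
    obtain ⟨δ, hδ, hWs⟩ := Sew.Wsmall hω hθ hT _ hε'
    obtain ⟨k0, hk0⟩ := eventually_atTop.1 (hmesh.eventually_lt_const hδ)
    refine ⟨k0, fun k hk => ?_⟩
    rw [dist_eq_norm]
    have hstar' := hstar s t h0 h1 h2 (π k).n (π k).pts
      (fun i j hij _ => (π k).mono hij) ((π k).first) ((π k).last)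
    have hWlt : Sew.W ω θ (π k).n (π k).pts < ε/(K+1) := by
      apply hWs _ _ (fun i j hij _ => (π k).mono hij)
        (by rw [(π k).first]; exact h0) (by rw [(π k).last]; exact h2)
      intro i hi
      have hle : (π k).pts (i+1) - (π k).pts i ≤ (π k).mesh :=
        le_ciSup ((Set.finite_range
          (fun j : Fin (π k).n => (π k).pts (j.1+1) - (π k).pts j.1)).bddAbove)
          (⟨i, hi⟩ : Fin (π k).n)
      linarith [hk0 k hk]
    have hKK : (0:ℝ) < K + 1 := by linarith
    calc ‖riemannSum (π k) Ξ - II s t‖ = ‖Sew.S Ξ (π k).n (π k).pts - II s t‖ := rfl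
      _ ≤ K * Sew.W ω θ (π k).n (π k).pts := hstar'
      _ ≤ K * (ε/(K+1)) := mul_le_mul_of_nonneg_left hWlt.le hK
      _ = ε * (K/(K+1)) := by field_simp
      _ < ε * 1 := by
          apply mul_lt_mul_of_pos_left _ hε
          rw [div_lt_one hKK]; linarith
      _ = ε := mul_one ε
end
end
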